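/- arXiv:1602.08667 — 6 statements merged into one kernel-verified Lean document; each statement's English description precedes it below -/
import Mathlib

section
/- Let R be a commutative ring with unity, G a group, H a subgroup of G of finite index m, and K a normal subgroup of H such that H/K is abelian. Let ψ : Mat(m, RH) → Mat(m, R(H/K)) be the map applying entrywise the R-algebra homomorphism RH → R(H/K) induced by the quotient map H → H/K. Then for any two complete sets T = {t₁, …, t_m} and T' = {t'₁, …, t'_m} of left coset representatives of H in G and any α ∈ RG, det(ψ(L_T(α))) = det(ψ(L_{T'}(α))) in R(H/K); that is, the noncommutative determinant Det = det ∘ ψ ∘ L_T : RG → R(H/K) is independent of the choice of left coset representatives. -/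
open MonoidAlgebra Finsupp

/-- Freeness: if a combination `∑ i, t'ᵢ · ι(xᵢ)` vanishes where `t'` is a
complete set of left coset representatives, then every `xᵢ` is zero. -/
lemma aux_free {R : Type*} [CommRing R] {G : Type*} [Group G] (H : Subgroup G)
    {m : ℕ} (t' : Fin m → G)
    (ht' : ∀ g : G, ∃! i : Fin m, (t' i)⁻¹ * g ∈ H)
    (x : Fin m → MonoidAlgebra R H)
    (hx : ∑ i, MonoidAlgebra.of R G (t' i) *
      MonoidAlgebra.mapDomainRingHom R H.subtype (x i) = 0) :
    ∀ i, x i = 0 := by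
  have hι : ∀ y : MonoidAlgebra R H,
      ((MonoidAlgebra.mapDomainRingHom R H.subtype) y).coeff
        = Finsupp.mapDomain Subtype.val y.coeff := fun _ => rfl
  intro i0
  ext h
  have hco := congrArg (fun f : MonoidAlgebra R G => f.coeff (t' i0 * (h : G))) hx
  simp only [MonoidAlgebra.coeff_zero, Finsupp.coe_zero, Pi.zero_apply] at hco
  rw [MonoidAlgebra.coeff_sum, Finsupp.finset_sum_apply] at hco
  rw [Finset.sum_eq_single i0] at hco
  · rw [MonoidAlgebra.of_apply, MonoidAlgebra.coeff_single_mul_mul,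
      hι, Finsupp.mapDomain_apply Subtype.val_injective, one_mul] at hco
    simpa using hco
  · intro i _ hi
    rw [MonoidAlgebra.of_apply, ← mul_inv_cancel_left (t' i) (t' i0 * (h : G)),
      MonoidAlgebra.coeff_single_mul_mul, hι,
      Finsupp.mapDomain_notin_range, mul_zero]
    rintro ⟨h', hh'⟩
    have hmem : (t' i)⁻¹ * (t' i0 * (h : G)) ∈ H := by
      rw [← hh']; exact h'.2
    have hmem0 : (t' i0)⁻¹ * (t' i0 * (h : G)) ∈ H := by
      rw [inv_mul_cancel_left]; exact h.2
    exact hi (((ht' (t' i0 * (h : G))).unique hmem hmem0))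
  · intro hni; exact absurd (Finset.mem_univ i0) hni


/-- The noncommutative determinant
`Det = det ∘ ψ ∘ L_T : RG → R(H/K)` is independent of the choice of the
complete set of left coset representatives.  Here the abelian quotient `H/K`
is encoded as a commutative group `A` together with a surjective homomorphism
`π : H →* A` with kernel `K`, and `ψ` applies `π` entrywise on matrices over
`RH` (via the induced `R`-algebra map `RH → R(H/K)`). -/
theorem noncommutative_determinant_indep_of_coset_reps
    {R : Type*} [CommRing R] {G : Type*} [Group G] (H : Subgroup G)
    (K : Subgroup H) [K.Normal]
    {A : Type*} [CommGroup A] (π : H →* A)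
    (hπ : Function.Surjective π) (hker : π.ker = K)
    (m : ℕ) (t t' : Fin m → G)
    (ht : ∀ g : G, ∃! i : Fin m, (t i)⁻¹ * g ∈ H)
    (ht' : ∀ g : G, ∃! i : Fin m, (t' i)⁻¹ * g ∈ H)
    (α : MonoidAlgebra R G)
    (L L' : Matrix (Fin m) (Fin m) (MonoidAlgebra R H))
    (hL : ∀ j : Fin m, α * MonoidAlgebra.of R G (t j) =
      ∑ i : Fin m, MonoidAlgebra.of R G (t i) *
        MonoidAlgebra.mapDomainRingHom R H.subtype (L i j))
    (hL' : ∀ j : Fin m, α * MonoidAlgebra.of R G (t' j) =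
      ∑ i : Fin m, MonoidAlgebra.of R G (t' i) *
        MonoidAlgebra.mapDomainRingHom R H.subtype (L' i j)) :
    (L.map (MonoidAlgebra.mapDomainRingHom R π)).det =
      (L'.map (MonoidAlgebra.mapDomainRingHom R π)).det := by
  classical
  -- the permutation σ with t' j ∈ t (σ j) H
  set σ : Fin m → Fin m := fun j => (ht (t' j)).choose with hσdef
  have hσmem : ∀ j, (t (σ j))⁻¹ * t' j ∈ H := fun j => (ht (t' j)).choose_spec.1
  have hσinj : Function.Injective σ := by
    intro j1 j2 hj
    have h1 := hσmem j1
    have h2 := hσmem j2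
    rw [hj] at h1
    have hmem : (t' j1)⁻¹ * t' j2 ∈ H := by
      have := H.mul_mem (H.inv_mem h1) h2
      simpa [mul_assoc] using this
    have hmem2 : (t' j2)⁻¹ * t' j2 ∈ H := by
      rw [inv_mul_cancel]; exact H.one_mem
    exact (ht' (t' j2)).unique hmem hmem2
  let e : Fin m ≃ Fin m := Equiv.ofBijective σ (Finite.injective_iff_bijective.mp hσinj)
  let h : Fin m → H := fun j => ⟨(t (e j))⁻¹ * t' j, hσmem j⟩
  have ht'eq : ∀ j, t' j = t (e j) * (h j : G) := by
    intro j; simp [h, mul_inv_cancel_left]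
  have hteq : ∀ i, t i = t' (e.symm i) * (((h (e.symm i))⁻¹ : H) : G) := by
    intro i
    rw [ht'eq (e.symm i)]
    simp [mul_assoc]
  set ι := MonoidAlgebra.mapDomainRingHom R H.subtype with hι
  have hofH : ∀ a : H, MonoidAlgebra.of R G (a : G) = ι (MonoidAlgebra.of R H a) := by
    intro a
    simp only [ι, MonoidAlgebra.of_apply]
    exact (MonoidAlgebra.mapDomain_single).symm
  -- key relation: L' i j = (h i)⁻¹ • L (e i) (e j) • (h j)
  have key : ∀ i j, L' i j =
      MonoidAlgebra.of R H (h i)⁻¹ * L (e i) (e j) * MonoidAlgebra.of R H (h j) := by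
    intro i j
    have hexp : α * MonoidAlgebra.of R G (t' j) =
        ∑ k : Fin m, MonoidAlgebra.of R G (t' k) *
          ι (MonoidAlgebra.of R H (h k)⁻¹ * L (e k) (e j) * MonoidAlgebra.of R H (h j)) := by
      have h1 : α * MonoidAlgebra.of R G (t' j)
          = (α * MonoidAlgebra.of R G (t (e j))) * ι (MonoidAlgebra.of R H (h j)) := by
        rw [mul_assoc, ← hofH, ← map_mul, ← ht'eq j]
      rw [h1, hL (e j), Finset.sum_mul,
        ← Equiv.sum_comp e.symm
          (fun k => MonoidAlgebra.of R G (t' k) *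
            ι (MonoidAlgebra.of R H (h k)⁻¹ * L (e k) (e j) * MonoidAlgebra.of R H (h j)))]
      refine Finset.sum_congr rfl fun i _ => ?_
      simp only [Equiv.apply_symm_apply]
      rw [hteq i]
      simp only [map_mul, hofH, mul_assoc]
    have hzero : ∑ k : Fin m, MonoidAlgebra.of R G (t' k) *
        ι (L' k j - (MonoidAlgebra.of R H (h k)⁻¹ * L (e k) (e j)
          * MonoidAlgebra.of R H (h j))) = 0 := by
      simp only [map_sub, mul_sub, Finset.sum_sub_distrib]
      rw [← hL' j, ← hexp, sub_self]
    have := aux_free H t' ht' _ hzero i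
    exact sub_eq_zero.mp this
  -- now pass to determinants
  set φ := MonoidAlgebra.mapDomainRingHom R π with hφ
  have hφof : ∀ a : H, φ (MonoidAlgebra.of R H a) = MonoidAlgebra.of R A (π a) := by
    intro a
    simp only [φ, MonoidAlgebra.of_apply]
    exact MonoidAlgebra.mapDomain_single
  set u : Fin m → MonoidAlgebra R A := fun j => MonoidAlgebra.of R A (π (h j)) with hu
  set v : Fin m → MonoidAlgebra R A := fun j => MonoidAlgebra.of R A ((π (h j))⁻¹) with hv
  have hmap : L'.map φ = Matrix.of fun i j => v i *
      (Matrix.of fun i j => ((L.map φ).submatrix e e) i j * u j) i j := by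
    refine Matrix.ext fun i j => ?_
    simp only [Matrix.map_apply, Matrix.of_apply, Matrix.submatrix_apply]
    rw [key i j, map_mul, map_mul, hφof, hφof, map_inv]
    ring
  rw [hmap, Matrix.det_mul_column v]
  have hcomm : (Matrix.of fun i j => ((L.map φ).submatrix e e) i j * u j)
      = Matrix.of fun i j => u j * ((L.map φ).submatrix e e) i j :=
    Matrix.ext fun i j => mul_comm _ _
  rw [hcomm, Matrix.det_mul_row u, Matrix.det_submatrix_equiv_self]
  rw [← mul_assoc, ← Finset.prod_mul_distrib]
  have hone : ∀ i, v i * u i = 1 := by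
    intro i
    simp only [u, v, MonoidAlgebra.of_apply]
    rw [MonoidAlgebra.single_mul_single, inv_mul_cancel, one_mul]
    rfl
  simp [hone]
end

section
/- Let R be a commutative ring with unity, G a group, H a subgroup of G of finite index m, K a normal subgroup of H such that H/K is abelian, and T a complete set of left coset representatives of H in G. Then the noncommutative determinant Det = det ∘ ψ ∘ L_T : RG → R(H/K) is multiplicative: Det(αβ) = Det(α) · Det(β) for all α, β ∈ RG, and Det(1) = 1. -/
/-- The noncommutative determinant
`Det = det ∘ ψ ∘ L_T : RG → R(H/K)` is multiplicative and unital: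
`Det(αβ) = Det(α)·Det(β)` and `Det(1) = 1`.  Here the abelian quotient `H/K`
is encoded as a commutative group `A` together with a surjective homomorphism
`π : H →* A` with kernel `K`, and `ψ` applies `π` entrywise on matrices over
`RH` (via the induced `R`-algebra map `RH → R(H/K)`). -/
theorem noncommutative_determinant_multiplicative
    {R : Type*} [CommRing R] {G : Type*} [Group G] (H : Subgroup G)
    (K : Subgroup H) [K.Normal]
    {A : Type*} [CommGroup A] (π : H →* A)
    (hπ : Function.Surjective π) (hker : π.ker = K)
    (m : ℕ) (t : Fin m → G)
    (ht : ∀ g : G, ∃! i : Fin m, (t i)⁻¹ * g ∈ H)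
    (L : MonoidAlgebra R G → Matrix (Fin m) (Fin m) (MonoidAlgebra R H))
    (hL : ∀ (α : MonoidAlgebra R G) (j : Fin m),
      α * MonoidAlgebra.of R G (t j) =
        ∑ i : Fin m, MonoidAlgebra.of R G (t i) *
          MonoidAlgebra.mapDomainRingHom R H.subtype (L α i j)) :
    (∀ α β : MonoidAlgebra R G,
      ((L (α * β)).map (MonoidAlgebra.mapDomainRingHom R π)).det =
        ((L α).map (MonoidAlgebra.mapDomainRingHom R π)).det *
          ((L β).map (MonoidAlgebra.mapDomainRingHom R π)).det) ∧
    ((L 1).map (MonoidAlgebra.mapDomainRingHom R π)).det = 1 := by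
  set σ : MonoidAlgebra R H →+* MonoidAlgebra R G :=
    MonoidAlgebra.mapDomainRingHom R H.subtype with hσ
  -- evaluation lemma
  have heval : ∀ (x : Fin m → MonoidAlgebra R H) (i0 : Fin m) (h : H),
      (∑ i, MonoidAlgebra.of R G (t i) * σ (x i)).coeff (t i0 * (h : G)) = (x i0).coeff h := by
    intro x i0 h
    rw [MonoidAlgebra.coeff_sum, Finsupp.finset_sum_apply]
    rw [Finset.sum_eq_single i0]
    · have : (σ (x i0)).coeff = Finsupp.mapDomain (H.subtype : H → G) (x i0).coeff := rfl
      rw [MonoidAlgebra.of_apply, MonoidAlgebra.coeff_single_mul_apply, this]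
      have h1 : (t i0)⁻¹ * (t i0 * (h : G)) = H.subtype h := by group; rfl
      rw [h1, Finsupp.mapDomain_apply H.subtype_injective, one_mul]
    · intro i _ hi
      have : (σ (x i)).coeff = Finsupp.mapDomain (H.subtype : H → G) (x i).coeff := rfl
      rw [MonoidAlgebra.of_apply, MonoidAlgebra.coeff_single_mul_apply, this]
      rw [Finsupp.mapDomain_notin_range, mul_zero]
      rintro ⟨a, ha⟩
      have hmem : (t i)⁻¹ * (t i0 * (h : G)) ∈ H := by rw [← ha]; exact a.2
      obtain ⟨j, hj, huniq⟩ := ht (t i0 * (h : G))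
      have hi0 : (t i0)⁻¹ * (t i0 * (h : G)) ∈ H := by
        have : (t i0)⁻¹ * (t i0 * (h : G)) = (h : G) := by group
        rw [this]; exact h.2
      exact hi ((huniq i hmem).trans (huniq i0 hi0).symm)
    · intro hn; exact absurd (Finset.mem_univ i0) hn
  have key : ∀ (x y : Fin m → MonoidAlgebra R H),
      (∑ i, MonoidAlgebra.of R G (t i) * σ (x i)) =
      (∑ i, MonoidAlgebra.of R G (t i) * σ (y i)) → x = y := by
    intro x y hxy
    funext i0
    ext h
    have := congrArg (fun f : MonoidAlgebra R G => f.coeff (t i0 * (h : G))) hxy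
    rwa [heval, heval] at this
  have hmul : ∀ α β : MonoidAlgebra R G, L (α * β) = L α * L β := by
    intro α β
    have hcol : ∀ j, (fun i => L (α * β) i j) = fun i => (L α * L β) i j := by
      intro j
      apply key
      calc (∑ i, MonoidAlgebra.of R G (t i) * σ (L (α * β) i j))
          = (α * β) * MonoidAlgebra.of R G (t j) := (hL (α * β) j).symm
        _ = α * (β * MonoidAlgebra.of R G (t j)) := by rw [mul_assoc]
        _ = α * ∑ k, MonoidAlgebra.of R G (t k) * σ (L β k j) := by rw [hL β j]
        _ = ∑ k, (α * MonoidAlgebra.of R G (t k)) * σ (L β k j) := by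
            rw [Finset.mul_sum]; simp [mul_assoc]
        _ = ∑ k, (∑ i, MonoidAlgebra.of R G (t i) * σ (L α i k)) * σ (L β k j) := by
            simp_rw [hL α]
        _ = ∑ i, MonoidAlgebra.of R G (t i) * σ ((L α * L β) i j) := by
            simp_rw [Finset.sum_mul, Matrix.mul_apply, map_sum, Finset.mul_sum, map_mul,
              mul_assoc]
            rw [Finset.sum_comm]
    funext i j
    exact congrFun (hcol j) i
  have hone : L 1 = 1 := by
    have hcol : ∀ j, (fun i => L 1 i j) = fun i => (1 : Matrix (Fin m) (Fin m) (MonoidAlgebra R H)) i j := by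
      intro j
      apply key
      calc (∑ i, MonoidAlgebra.of R G (t i) * σ (L 1 i j))
          = 1 * MonoidAlgebra.of R G (t j) := (hL 1 j).symm
        _ = MonoidAlgebra.of R G (t j) := one_mul _
        _ = ∑ i, MonoidAlgebra.of R G (t i) *
              σ ((1 : Matrix (Fin m) (Fin m) (MonoidAlgebra R H)) i j) := by
            simp [Matrix.one_apply, apply_ite σ]
    funext i j
    exact congrFun (hcol j) i
  constructor
  · intro α β
    rw [hmul α β, Matrix.map_mul, Matrix.det_mul]
  · rw [hone, Matrix.map_one _ (map_zero _) (map_one _), Matrix.det_one]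
end

section
/- Let R be a commutative ring with unity, G a group, H a subgroup of G of finite index m, K a normal subgroup of H such that H/K is abelian, and T = {t₁, …, t_m} a complete set of left coset representatives of H in G. Then for every g ∈ G there exists a sign sgn(g) ∈ {−1, 1} such that Det(g) = det(ψ(L_T(g))) = sgn(g) · V_{G→H/K}(g) in R(H/K), where V_{G→H/K}(g) = ∏_{i=1}^m ((\overline{g tᵢ})⁻¹ g tᵢ)K is the left transfer regarded as the corresponding basis element of R(H/K). Moreover sgn(g) is the sign of the permutation of {1, …, m} induced by the left action of g on the left cosets t₁H, …, t_mH. -/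
/-- For a group element `g`, the noncommutative determinant
equals the left transfer up to sign:
`Det(g) = det(ψ(L_T(g))) = sgn(g) · V_{G→H/K}(g)` in `R(H/K)`, where `sgn(g)`
is the sign of the permutation `σ` of `{1,…,m}` induced by the left action of
`g` on the left cosets (`g tⱼ H = t_{σ j} H`), and the transfer value
`V_{G→H/K}(g) = ∏ᵢ π((t (bar (g tᵢ)))⁻¹ g tᵢ)` is regarded as the
corresponding basis element of `R(H/K)`.  The abelian quotient `H/K` is
encoded as a commutative group `A` with a surjective homomorphism `π : H →* A`
with kernel `K`, and `ψ` applies `π` entrywise. -/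
theorem noncommutative_determinant_eq_sign_mul_transfer
    {R : Type*} [CommRing R] {G : Type*} [Group G] (H : Subgroup G)
    (K : Subgroup H) [K.Normal]
    {A : Type*} [CommGroup A] (π : H →* A)
    (hπ : Function.Surjective π) (hker : π.ker = K)
    (m : ℕ) (t : Fin m → G)
    (ht : ∀ g : G, ∃! i : Fin m, (t i)⁻¹ * g ∈ H)
    (bar : G → Fin m) (hbar : ∀ g : G, (t (bar g))⁻¹ * g ∈ H)
    (g : G)
    (σ : Equiv.Perm (Fin m)) (hσ : ∀ j : Fin m, (t (σ j))⁻¹ * (g * t j) ∈ H)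
    (L : Matrix (Fin m) (Fin m) (MonoidAlgebra R H))
    (hL : ∀ j : Fin m, MonoidAlgebra.of R G g * MonoidAlgebra.of R G (t j) =
      ∑ i : Fin m, MonoidAlgebra.of R G (t i) *
        MonoidAlgebra.mapDomainRingHom R H.subtype (L i j)) :
    (L.map (MonoidAlgebra.mapDomainRingHom R π)).det =
      ((Equiv.Perm.sign σ : ℤ)) •
        MonoidAlgebra.single
          (∏ i : Fin m, π ⟨(t (bar (g * t i)))⁻¹ * (g * t i), hbar (g * t i)⟩)
          (1 : R)
:= by
  classical
  have hre : ∀ (v : MonoidAlgebra R H) (y : G),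
      (MonoidAlgebra.mapDomainRingHom R H.subtype v).coeff y
        = Finsupp.mapDomain (⇑H.subtype) v.coeff y := fun _ _ => rfl
  have hbarσ : ∀ i : Fin m, bar (g * t i) = σ i := by
    intro i
    obtain ⟨i', -, huniq⟩ := ht (g * t i)
    rw [huniq _ (hbar (g * t i)), huniq _ (hσ i)]
  have hcol : ∀ j i : Fin m, L i j =
      if i = σ j then MonoidAlgebra.single (⟨(t (σ j))⁻¹ * (g * t j), hσ j⟩ : H) (1 : R)
      else 0 := by
    intro j i0
    have key : ∀ h0 : H, (L i0 j).coeff h0 =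
        if g * t j = t i0 * (h0 : G) then (1 : R) else 0 := by
      intro h0
      have := congrArg (fun α : MonoidAlgebra R G => α.coeff (t i0 * (h0 : G))) (hL j)
      simp only [MonoidAlgebra.of_apply, MonoidAlgebra.single_mul_single, one_mul] at this
      rw [MonoidAlgebra.coeff_sum, Finsupp.finset_sum_apply] at this
      simp only [MonoidAlgebra.coeff_single_mul_apply, one_mul] at this
      rw [Finset.sum_eq_single i0] at this
      · rw [inv_mul_cancel_left, hre,
          show ((h0 : G)) = H.subtype h0 from rfl,
          Finsupp.mapDomain_apply H.subtype_injective,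
          MonoidAlgebra.coeff_single, Finsupp.single_apply] at this
        exact this.symm
      · intro i _ hne
        rw [hre]
        have hnr : (t i)⁻¹ * (t i0 * (h0 : G)) ∉ Set.range (H.subtype) := by
          rintro ⟨x, hx⟩
          apply hne
          obtain ⟨i', -, huniq⟩ := ht (t i0 * (h0 : G))
          have h1 : (t i)⁻¹ * (t i0 * (h0 : G)) ∈ H := by rw [← hx]; exact x.2
          have h2 : (t i0)⁻¹ * (t i0 * (h0 : G)) ∈ H := by
            rw [inv_mul_cancel_left]; exact h0.2
          rw [huniq _ h1, huniq _ h2]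
        rw [Finsupp.mapDomain_notin_range _ _ hnr]
      · intro h; exact absurd (Finset.mem_univ i0) h
    by_cases hi : i0 = σ j
    · rw [if_pos hi]
      ext h0
      rw [key h0, MonoidAlgebra.coeff_single, Finsupp.single_apply, hi]
      refine if_congr ?_ rfl rfl
      constructor
      · intro h
        apply Subtype.ext
        show (t (σ j))⁻¹ * (g * t j) = (h0 : G)
        rw [h, inv_mul_cancel_left]
      · intro h
        have h' : ((h0 : G)) = (t (σ j))⁻¹ * (g * t j) := congrArg Subtype.val h.symm
        rw [h', mul_inv_cancel_left]
    · rw [if_neg hi]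
      ext h0
      have hc : ¬ (g * t j = t i0 * (h0 : G)) := by
        intro h
        apply hi
        obtain ⟨i', -, huniq⟩ := ht (g * t j)
        have h1 : (t i0)⁻¹ * (g * t j) ∈ H := by
          rw [h, inv_mul_cancel_left]; exact h0.2
        rw [huniq _ h1, huniq _ (hσ j)]
      rw [key h0, if_neg hc]
      rfl
  set d : Fin m → MonoidAlgebra R A := fun j =>
    MonoidAlgebra.single (π ⟨(t (σ j))⁻¹ * (g * t j), hσ j⟩) (1 : R) with hd
  have hψ : ∀ (h : H), (MonoidAlgebra.mapDomainRingHom R π)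
      (MonoidAlgebra.single h (1 : R)) = MonoidAlgebra.single (π h) (1 : R) := by
    intro h
    show MonoidAlgebra.mapDomain (⇑π) (MonoidAlgebra.single h (1 : R)) = MonoidAlgebra.single (π h) (1 : R)
    rw [MonoidAlgebra.mapDomain_single]
  have hM : L.map (MonoidAlgebra.mapDomainRingHom R π) =
      fun i j => if i = σ j then d j else 0 := by
    refine Matrix.ext fun i j => ?_
    show (MonoidAlgebra.mapDomainRingHom R π) (L i j) = if i = σ j then d j else 0
    rw [hcol j i]
    by_cases hij : i = σ j
    · rw [if_pos hij, if_pos hij, hψ]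
    · rw [if_neg hij, if_neg hij, map_zero]
  have hsub : (L.map (MonoidAlgebra.mapDomainRingHom R π)).submatrix σ id =
      Matrix.diagonal d := by
    refine Matrix.ext fun i j => ?_
    simp only [Matrix.submatrix_apply, Matrix.diagonal_apply, id]
    simp only [hM]
    by_cases hij : i = j
    · subst hij; simp
    · rw [if_neg (fun h => hij (σ.injective h)), if_neg hij]
  have hdet := Matrix.det_permute σ (L.map (MonoidAlgebra.mapDomainRingHom R π))
  rw [hsub, Matrix.det_diagonal] at hdet
  have hsgn : ((Equiv.Perm.sign σ : ℤ) : MonoidAlgebra R A) *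
      ((Equiv.Perm.sign σ : ℤ) : MonoidAlgebra R A) = 1 := by
    rcases Int.units_eq_one_or (Equiv.Perm.sign σ) with h | h <;> rw [h] <;> norm_num
  have hdet2 : (L.map (MonoidAlgebra.mapDomainRingHom R π)).det =
      ((Equiv.Perm.sign σ : ℤ) : MonoidAlgebra R A) * ∏ i : Fin m, d i := by
    calc (L.map (MonoidAlgebra.mapDomainRingHom R π)).det
        = 1 * (L.map (MonoidAlgebra.mapDomainRingHom R π)).det := (one_mul _).symm
      _ = ((Equiv.Perm.sign σ : ℤ) : MonoidAlgebra R A) *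
          (((Equiv.Perm.sign σ : ℤ) : MonoidAlgebra R A) *
            (L.map (MonoidAlgebra.mapDomainRingHom R π)).det) := by
          rw [← mul_assoc, hsgn]
      _ = _ := by rw [← hdet]
  rw [hdet2, zsmul_eq_mul]
  congr 1
  have : ∏ i : Fin m, d i =
      MonoidAlgebra.single (∏ i : Fin m, π ⟨(t (σ i))⁻¹ * (g * t i), hσ i⟩)
        (∏ _i : Fin m, (1 : R)) := MonoidAlgebra.prod_single _ _ _
  rw [this, Finset.prod_const_one]
  congr 1
  refine Finset.prod_congr rfl fun i _ => ?_
  congr 1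
  apply Subtype.ext
  simp [hbarσ i]
end

section
/- Let R be a commutative ring with unity, G a group, H a subgroup of G of finite index m, and {u₁, …, u_m} a complete set of right coset representatives of H in G. For every α ∈ RG there exists a unique matrix R_U(α) ∈ Mat(m, RH) such that (u₁ … u_m)ᵀ α = R_U(α) (u₁ … u_m)ᵀ as column vectors over RG, and its entries are given explicitly by R_U(α)_{ij} = ∑_{g∈G} χ̇(uᵢ g u_j⁻¹) · x_g · (uᵢ g u_j⁻¹) for α = ∑_{g∈G} x_g g, where χ̇(g) = 1 if g ∈ H and 0 otherwise. -/
open scoped Classical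

section Aux

variable {R : Type*} [CommRing R] {G : Type*} [Group G] (H : Subgroup G)

lemma keyA (β : MonoidAlgebra R H) (v : G) (g : G) :
    (MonoidAlgebra.mapDomainRingHom R H.subtype β * MonoidAlgebra.of R G v).coeff g
      = if hg : g * v⁻¹ ∈ H then β.coeff ⟨g * v⁻¹, hg⟩ else 0 := by
  rw [MonoidAlgebra.of_apply, MonoidAlgebra.mul_single_apply, mul_one,
    MonoidAlgebra.mapDomainRingHom_apply, MonoidAlgebra.coeff_mapDomain]
  split_ifs with hg
  · exact Finsupp.mapDomain_apply H.subtype_injective β.coeff ⟨g * v⁻¹, hg⟩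
  · apply Finsupp.mapDomain_notin_range
    rintro ⟨h, hh⟩
    exact hg (hh ▸ h.2)

end Aux

/-- For every `α ∈ RG` there is a unique matrix
`R_U(α) ∈ Mat(m, RH)` with `uᵢ α = ∑ⱼ R_U(α) i j · uⱼ` in `RG` for every `i`
(the right regular representation with respect to the complete set `u` of
right coset representatives), and its entries are given explicitly by
`R_U(α) i j = ∑ g, χ̇(uᵢ g uⱼ⁻¹) x_g (uᵢ g uⱼ⁻¹)` for `α = ∑ g, x_g g`. -/
theorem right_regular_representation_exists_unique_and_entries
    {R : Type*} [CommRing R] {G : Type*} [Group G] (H : Subgroup G)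
    (m : ℕ) (u : Fin m → G)
    (hu : ∀ g : G, ∃! i : Fin m, g * (u i)⁻¹ ∈ H)
    (α : MonoidAlgebra R G) :
    (∃! Rm : Matrix (Fin m) (Fin m) (MonoidAlgebra R H),
      ∀ i : Fin m, MonoidAlgebra.of R G (u i) * α =
        ∑ j : Fin m, MonoidAlgebra.mapDomainRingHom R H.subtype (Rm i j) *
          MonoidAlgebra.of R G (u j)) ∧
    (∀ Rm : Matrix (Fin m) (Fin m) (MonoidAlgebra R H),
      (∀ i : Fin m, MonoidAlgebra.of R G (u i) * α =
        ∑ j : Fin m, MonoidAlgebra.mapDomainRingHom R H.subtype (Rm i j) *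
          MonoidAlgebra.of R G (u j)) →
      ∀ i j : Fin m, Rm i j =
        Finsupp.sum α.coeff fun (g : G) (x : R) =>
          if hg : u i * g * (u j)⁻¹ ∈ H then
            MonoidAlgebra.single (⟨u i * g * (u j)⁻¹, hg⟩ : H) x
          else 0) := by
  -- the explicit candidate matrix
  set Ent : Matrix (Fin m) (Fin m) (MonoidAlgebra R H) := fun i j =>
    Finsupp.sum α.coeff fun (g : G) (x : R) =>
      if hg : u i * g * (u j)⁻¹ ∈ H then
        MonoidAlgebra.single (⟨u i * g * (u j)⁻¹, hg⟩ : H) x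
      else 0 with hEnt
  -- pointwise value of `Ent`
  have entry_eval : ∀ (i j : Fin m) (h : H),
      (Ent i j).coeff h = α.coeff ((u i)⁻¹ * (h : G) * u j) := by
    intro i j h
    rw [hEnt]
    rw [MonoidAlgebra.coeff_finsuppSum, Finsupp.sum_apply]
    rw [Finsupp.sum]
    rw [Finset.sum_eq_single ((u i)⁻¹ * (h : G) * u j)]
    · have hg : u i * ((u i)⁻¹ * (h : G) * u j) * (u j)⁻¹ ∈ H := by
        have : u i * ((u i)⁻¹ * (h : G) * u j) * (u j)⁻¹ = (h : G) := by group
        rw [this]; exact h.2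
      rw [dif_pos hg]
      have : (⟨u i * ((u i)⁻¹ * (h : G) * u j) * (u j)⁻¹, hg⟩ : H) = h := by
        ext; group
      rw [this, MonoidAlgebra.coeff_single, Finsupp.single_apply, if_pos rfl]
    · intro g _ hgne
      split_ifs with hg
      · have hne : (⟨u i * g * (u j)⁻¹, hg⟩ : H) ≠ h := by
          intro hcon
          apply hgne
          have : u i * g * (u j)⁻¹ = (h : G) := congrArg Subtype.val hcon
          rw [← this]; group
        rw [MonoidAlgebra.coeff_single, Finsupp.single_apply, if_neg hne]
      · rfl
    · intro hns
      rw [Finsupp.notMem_support_iff.mp hns]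
      split_ifs with hg
      · simp
      · rfl
  -- `Ent` satisfies the defining equations
  have sat : ∀ i : Fin m, MonoidAlgebra.of R G (u i) * α =
      ∑ j : Fin m, MonoidAlgebra.mapDomainRingHom R H.subtype (Ent i j) *
        MonoidAlgebra.of R G (u j) := by
    intro i
    ext g
    rw [MonoidAlgebra.coeff_sum, Finset.sum_apply']
    obtain ⟨j₀, hj₀, hj₀uniq⟩ := hu g
    rw [Finset.sum_eq_single j₀]
    · rw [keyA, dif_pos hj₀, entry_eval]
      have : (u i)⁻¹ * (g * (u j₀)⁻¹) * u j₀ = (u i)⁻¹ * g := by group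
      rw [this, MonoidAlgebra.of_apply, MonoidAlgebra.single_mul_apply, one_mul]
    · intro j _ hj
      rw [keyA, dif_neg]
      intro hcon
      exact hj (hj₀uniq j hcon)
    · intro h; exact absurd (Finset.mem_univ j₀) h
  -- any matrix satisfying the equations equals `Ent`
  have uniq : ∀ Rm : Matrix (Fin m) (Fin m) (MonoidAlgebra R H),
      (∀ i : Fin m, MonoidAlgebra.of R G (u i) * α =
        ∑ j : Fin m, MonoidAlgebra.mapDomainRingHom R H.subtype (Rm i j) *
          MonoidAlgebra.of R G (u j)) → Rm = Ent := by
    intro Rm hRm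
    funext i j
    have hsum : ∑ j' : Fin m, MonoidAlgebra.mapDomainRingHom R H.subtype (Rm i j') *
          MonoidAlgebra.of R G (u j')
        = ∑ j' : Fin m, MonoidAlgebra.mapDomainRingHom R H.subtype (Ent i j') *
          MonoidAlgebra.of R G (u j') := by
      rw [← hRm i, ← sat i]
    have key : ∀ (Sm : Matrix (Fin m) (Fin m) (MonoidAlgebra R H)) (h : H),
        (∑ j' : Fin m, MonoidAlgebra.mapDomainRingHom R H.subtype (Sm i j') *
          MonoidAlgebra.of R G (u j')).coeff ((h : G) * u j) = (Sm i j).coeff h := by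
      intro Sm h
      rw [MonoidAlgebra.coeff_sum, Finset.sum_apply']
      have hj : (h : G) * u j * (u j)⁻¹ ∈ H := by
        have : (h : G) * u j * (u j)⁻¹ = (h : G) := by group
        rw [this]; exact h.2
      rw [Finset.sum_eq_single j]
      · rw [keyA, dif_pos hj]
        congr 1
        ext; group
      · intro j' _ hj'
        rw [keyA, dif_neg]
        intro hcon
        obtain ⟨j₀, _, hj₀uniq⟩ := hu ((h : G) * u j)
        exact hj' ((hj₀uniq j' hcon).trans (hj₀uniq j hj).symm)
      · intro hns; exact absurd (Finset.mem_univ j) hns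
    ext h
    have h1 := key Rm h
    rw [hsum] at h1
    rw [← h1]
    exact key Ent h
  exact ⟨⟨Ent, sat, fun Rm hRm => uniq Rm hRm⟩, fun Rm hRm i j => by rw [uniq Rm hRm]⟩
end

section
/- Let R be a commutative ring with unity, G a group, H a subgroup of G of finite index m, and K a normal subgroup of H with H/K abelian. Let T = {t₁, …, t_m} be a complete set of left coset representatives and U = {u₁, …, u_m} any complete set of right coset representatives of H in G. Then for every g ∈ G, det(ψ(R_U(g))) = det(ψ(L_T(g))) in R(H/K); that is, the noncommutative determinant computed from any right regular representation agrees on group elements with that computed from any left regular representation. -/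
open MonoidAlgebra Finset

private lemma aux_left_inj {R : Type*} [CommRing R] {G : Type*} [Group G] (H : Subgroup G)
    {m : ℕ} (t : Fin m → G) (ht : ∀ g : G, ∃! i : Fin m, (t i)⁻¹ * g ∈ H)
    (x : Fin m → MonoidAlgebra R H)
    (hx : ∑ i : Fin m, MonoidAlgebra.of R G (t i) *
        MonoidAlgebra.mapDomainRingHom R H.subtype (x i) = 0) :
    ∀ i, x i = 0 := by
  intro i
  ext h
  rw [MonoidAlgebra.coeff_zero, Finsupp.zero_apply]
  have key := congrArg (fun f : MonoidAlgebra R G => f.coeff (t i * (h : G))) hx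
  simp only [MonoidAlgebra.coeff_zero, Finsupp.coe_zero, Pi.zero_apply] at key
  rw [MonoidAlgebra.coeff_sum, Finset.sum_apply'] at key
  rw [Finset.sum_eq_single i] at key
  · simpa [MonoidAlgebra.of_apply, MonoidAlgebra.coeff_single_mul_apply, MonoidAlgebra.mapDomainRingHom_apply,
        MonoidAlgebra.coeff_mapDomain,
      Finsupp.mapDomain_apply (Subtype.coe_injective : Function.Injective (H.subtype))] using key
  · intro i' _ hne
    have hnot : (t i')⁻¹ * (t i * (h : G)) ∉ Set.range (H.subtype) := by
      rintro ⟨h', hh'⟩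
      have hmem : (t i')⁻¹ * (t i * (h : G)) ∈ H := hh' ▸ h'.2
      have hi : (t i)⁻¹ * (t i * (h : G)) ∈ H := by
        simpa using h.2
      exact hne (((ht (t i * (h : G))).unique hmem hi))
    simp only [MonoidAlgebra.of_apply, MonoidAlgebra.coeff_single_mul_apply, one_mul,
      MonoidAlgebra.mapDomainRingHom_apply, MonoidAlgebra.coeff_mapDomain]
    exact Finsupp.mapDomain_notin_range _ _ (by simpa using hnot)
  · simp

private lemma aux_right_inj {R : Type*} [CommRing R] {G : Type*} [Group G] (H : Subgroup G)
    {m : ℕ} (u : Fin m → G) (hu : ∀ g : G, ∃! i : Fin m, g * (u i)⁻¹ ∈ H)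
    (x : Fin m → MonoidAlgebra R H)
    (hx : ∑ j : Fin m, MonoidAlgebra.mapDomainRingHom R H.subtype (x j) *
        MonoidAlgebra.of R G (u j) = 0) :
    ∀ j, x j = 0 := by
  intro j
  ext h
  rw [MonoidAlgebra.coeff_zero, Finsupp.zero_apply]
  have key := congrArg (fun f : MonoidAlgebra R G => f.coeff ((h : G) * u j)) hx
  simp only [MonoidAlgebra.coeff_zero, Finsupp.coe_zero, Pi.zero_apply] at key
  rw [MonoidAlgebra.coeff_sum, Finset.sum_apply'] at key
  rw [Finset.sum_eq_single j] at key
  · simpa [MonoidAlgebra.of_apply, MonoidAlgebra.coeff_mul_single_apply, MonoidAlgebra.mapDomainRingHom_apply,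
        MonoidAlgebra.coeff_mapDomain,
      Finsupp.mapDomain_apply (Subtype.coe_injective : Function.Injective (H.subtype))] using key
  · intro j' _ hne
    have hnot : ((h : G) * u j) * (u j')⁻¹ ∉ Set.range (H.subtype) := by
      rintro ⟨h', hh'⟩
      have hmem : ((h : G) * u j) * (u j')⁻¹ ∈ H := hh' ▸ h'.2
      have hj : ((h : G) * u j) * (u j)⁻¹ ∈ H := by simpa using h.2
      exact hne (((hu ((h : G) * u j)).unique hmem hj))
    simp only [MonoidAlgebra.of_apply, MonoidAlgebra.coeff_mul_single_apply, mul_one,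
      MonoidAlgebra.mapDomainRingHom_apply, MonoidAlgebra.coeff_mapDomain]
    exact Finsupp.mapDomain_notin_range _ _ (by simpa using hnot)
  · simp

/-- For every group element `g`, the noncommutative
determinant computed from any right regular representation agrees with the one
computed from any left regular representation:
`det(ψ(R_U(g))) = det(ψ(L_T(g)))` in `R(H/K)`.  The abelian quotient `H/K` is
encoded as a commutative group `A` with a surjective homomorphism `π : H →* A`
with kernel `K`, and `ψ` applies `π` entrywise. -/
theorem right_determinant_eq_left_determinant
    {R : Type*} [CommRing R] {G : Type*} [Group G] (H : Subgroup G)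
    (K : Subgroup H) [K.Normal]
    {A : Type*} [CommGroup A] (π : H →* A)
    (hπ : Function.Surjective π) (hker : π.ker = K)
    (m : ℕ) (t u : Fin m → G)
    (ht : ∀ g : G, ∃! i : Fin m, (t i)⁻¹ * g ∈ H)
    (hu : ∀ g : G, ∃! i : Fin m, g * (u i)⁻¹ ∈ H)
    (g : G)
    (L Rm : Matrix (Fin m) (Fin m) (MonoidAlgebra R H))
    (hL : ∀ j : Fin m, MonoidAlgebra.of R G g * MonoidAlgebra.of R G (t j) =
      ∑ i : Fin m, MonoidAlgebra.of R G (t i) *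
        MonoidAlgebra.mapDomainRingHom R H.subtype (L i j))
    (hR : ∀ i : Fin m, MonoidAlgebra.of R G (u i) * MonoidAlgebra.of R G g =
      ∑ j : Fin m, MonoidAlgebra.mapDomainRingHom R H.subtype (Rm i j) *
        MonoidAlgebra.of R G (u j)) :
    (Rm.map (MonoidAlgebra.mapDomainRingHom R π)).det =
      (L.map (MonoidAlgebra.mapDomainRingHom R π)).det := by
  classical
  -- uniqueness of coset indices
  have htuniq : ∀ i i' : Fin m, (t i)⁻¹ * t i' ∈ H → i = i' := by
    intro i i' hm
    have h1 : (t i')⁻¹ * t i' ∈ H := by simpa using H.one_mem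
    exact (ht (t i')).unique hm h1
  have huuniq : ∀ i i' : Fin m, u i * (u i')⁻¹ ∈ H → i' = i := by
    intro i i' hm
    have h1 : u i * (u i)⁻¹ ∈ H := by simpa using H.one_mem
    exact (hu (u i)).unique hm h1
  -- the permutation σ induced by left multiplication by g on left cosets
  set σf : Fin m → Fin m := fun j => (ht (g * t j)).choose with hσfdef
  have hσmem : ∀ j, (t (σf j))⁻¹ * (g * t j) ∈ H := fun j => (ht (g * t j)).choose_spec.1
  have hσuniq : ∀ j i, (t i)⁻¹ * (g * t j) ∈ H → i = σf j :=
    fun j i hi => (ht (g * t j)).choose_spec.2 i hi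
  have hσinj : Function.Injective σf := by
    intro j j' he
    have hmem' : (t (σf j))⁻¹ * (g * t j') ∈ H := by rw [he]; exact hσmem j'
    have hmem : ((t (σf j))⁻¹ * (g * t j))⁻¹ * ((t (σf j))⁻¹ * (g * t j')) ∈ H :=
      H.mul_mem (H.inv_mem (hσmem j)) hmem'
    apply htuniq j j'
    have : (t j)⁻¹ * t j' =
        ((t (σf j))⁻¹ * (g * t j))⁻¹ * ((t (σf j))⁻¹ * (g * t j')) := by group
    rw [this]; exact hmem
  set σe : Equiv.Perm (Fin m) :=
    Equiv.ofBijective σf (Finite.injective_iff_bijective.mp hσinj) with hσedef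
  have hσe : ∀ j, σe j = σf j := fun _ => rfl
  set hh : Fin m → H := fun j => ⟨(t (σf j))⁻¹ * (g * t j), hσmem j⟩ with hhdef
  -- the permutation τ induced by right multiplication by g on right cosets
  set τf : Fin m → Fin m := fun i => (hu (u i * g)).choose with hτfdef
  have hτmem : ∀ i, (u i * g) * (u (τf i))⁻¹ ∈ H := fun i => (hu (u i * g)).choose_spec.1
  have hτuniq : ∀ i j, (u i * g) * (u j)⁻¹ ∈ H → j = τf i :=
    fun i j hj => (hu (u i * g)).choose_spec.2 j hj
  set hh' : Fin m → H := fun i => ⟨(u i * g) * (u (τf i))⁻¹, hτmem i⟩ with hh'def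
  -- the permutation ρ matching right cosets of u with inverses of t
  set ρf : Fin m → Fin m := fun i => (ht (u i)⁻¹).choose with hρfdef
  have hρmem : ∀ i, (t (ρf i))⁻¹ * (u i)⁻¹ ∈ H := fun i => (ht (u i)⁻¹).choose_spec.1
  have hρinj : Function.Injective ρf := by
    intro i i' he
    have h1 : u i * t (ρf i) ∈ H := by
      have := H.inv_mem (hρmem i)
      simpa [mul_inv_rev] using this
    have h2 : u i' * t (ρf i) ∈ H := by
      have := H.inv_mem (hρmem i')
      rw [← he] at this
      simpa [mul_inv_rev] using this
    have : u i' * (u i)⁻¹ ∈ H := by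
      have := H.mul_mem h2 (H.inv_mem h1)
      simpa [mul_inv_rev, mul_assoc] using this
    exact huuniq i' i this
  set ρe : Equiv.Perm (Fin m) :=
    Equiv.ofBijective ρf (Finite.injective_iff_bijective.mp hρinj) with hρedef
  have hρe : ∀ i, ρe i = ρf i := fun _ => rfl
  set k : Fin m → H := fun i => ⟨u i * t (ρf i), by
    have := H.inv_mem (hρmem i); simpa [mul_inv_rev] using this⟩ with hkdef
  -- the key relation between τ, σ, ρ and the h's
  have hkey : ∀ i, τf i = ρe.symm (σe.symm (ρe i)) ∧
      hh' i = k i * hh (σe.symm (ρe i)) * (k (τf i))⁻¹ := by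
    intro i
    set j : Fin m := σe.symm (ρe i) with hjdef
    set jj : Fin m := ρe.symm j with hjjdef
    have hσj : σf j = ρf i := by
      have : σe j = ρe i := by rw [hjdef, Equiv.apply_symm_apply]
      simpa [hσe, hρe] using this
    have hρjj : ρf jj = j := by
      have : ρe jj = j := by rw [hjjdef, Equiv.apply_symm_apply]
      simpa [hρe] using this
    have hcoe : u i * g * (u jj)⁻¹ = ((k i * hh j * (k jj)⁻¹ : H) : G) := by
      push_cast
      simp only [hkdef, hhdef]
      rw [hσj, hρjj]
      group
    have hmem : (u i * g) * (u jj)⁻¹ ∈ H := by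
      rw [hcoe]; exact SetLike.coe_mem _
    have hτ : τf i = jj := (hτuniq i jj hmem).symm
    constructor
    · exact hτ
    · apply Subtype.ext
      show u i * g * (u (τf i))⁻¹ = ((k i * hh j * (k (τf i))⁻¹ : H) : G)
      rw [hτ]
      exact hcoe
  have hτρ : ∀ i, τf i = ρe.symm (σe.symm (ρe i)) := fun i => (hkey i).1
  set τe : Equiv.Perm (Fin m) := ρe⁻¹ * σe⁻¹ * ρe with hτedef
  have hτe : ∀ i, τe i = τf i := by
    intro i
    rw [hτρ i, hτedef]
    rfl
  -- value of L
  have hLval : ∀ i j, L i j = if i = σf j then MonoidAlgebra.of R H (hh j) else 0 := by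
    intro i j
    have hsum : ∑ i' : Fin m, MonoidAlgebra.of R G (t i') *
        MonoidAlgebra.mapDomainRingHom R H.subtype
          (if i' = σf j then MonoidAlgebra.of R H (hh j) else 0) =
        MonoidAlgebra.of R G g * MonoidAlgebra.of R G (t j) := by
      rw [Finset.sum_eq_single (σf j)]
      · rw [if_pos rfl]
        have hmap : MonoidAlgebra.mapDomainRingHom R H.subtype (MonoidAlgebra.of R H (hh j)) =
            MonoidAlgebra.single ((hh j : H) : G) (1:R) := by
          simp [MonoidAlgebra.of_apply, MonoidAlgebra.mapDomainRingHom_apply,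
            Finsupp.mapDomain.addMonoidHom_apply, Finsupp.mapDomain_single]
        rw [hmap, MonoidAlgebra.of_apply, MonoidAlgebra.of_apply, MonoidAlgebra.of_apply,
          MonoidAlgebra.single_mul_single, MonoidAlgebra.single_mul_single, one_mul]
        congr 1
        show t (σf j) * ((t (σf j))⁻¹ * (g * t j)) = g * t j
        group
      · intro i' _ hne
        simp [if_neg hne]
      · simp
    have hz := aux_left_inj H t ht
      (fun i' => L i' j - if i' = σf j then MonoidAlgebra.of R H (hh j) else 0)
      (by
        simp only [map_sub, mul_sub, Finset.sum_sub_distrib]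
        rw [← hL j, hsum, sub_self])
    have := hz i
    simpa [sub_eq_zero] using this
  -- value of Rm
  have hRval : ∀ i j, Rm i j = if j = τf i then MonoidAlgebra.of R H (hh' i) else 0 := by
    intro i j
    have hsum : ∑ j' : Fin m,
        MonoidAlgebra.mapDomainRingHom R H.subtype
          (if j' = τf i then MonoidAlgebra.of R H (hh' i) else 0) *
          MonoidAlgebra.of R G (u j') =
        MonoidAlgebra.of R G (u i) * MonoidAlgebra.of R G g := by
      rw [Finset.sum_eq_single (τf i)]
      · rw [if_pos rfl]
        have hmap : MonoidAlgebra.mapDomainRingHom R H.subtype (MonoidAlgebra.of R H (hh' i)) =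
            MonoidAlgebra.single ((hh' i : H) : G) (1:R) := by
          simp [MonoidAlgebra.of_apply, MonoidAlgebra.mapDomainRingHom_apply,
            Finsupp.mapDomain.addMonoidHom_apply, Finsupp.mapDomain_single]
        rw [hmap, MonoidAlgebra.of_apply, MonoidAlgebra.of_apply, MonoidAlgebra.of_apply,
          MonoidAlgebra.single_mul_single, MonoidAlgebra.single_mul_single, one_mul]
        congr 1
        show ((u i * g) * (u (τf i))⁻¹) * u (τf i) = u i * g
        group
      · intro j' _ hne
        simp [if_neg hne]
      · simp
    have hz := aux_right_inj H u hu
      (fun j' => Rm i j' - if j' = τf i then MonoidAlgebra.of R H (hh' i) else 0)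
      (by
        simp only [map_sub, sub_mul, Finset.sum_sub_distrib]
        rw [← hR i, hsum, sub_self])
    have := hz j
    simpa [sub_eq_zero] using this
  -- matrix factorizations
  have hLmat : L.map (MonoidAlgebra.mapDomainRingHom R π) =
      (σe⁻¹).permMatrix (MonoidAlgebra R A) *
        Matrix.diagonal (fun j => MonoidAlgebra.of R A (π (hh j))) := by
    ext i j
    rw [Matrix.map_apply, hLval i j, Matrix.mul_diagonal]
    rw [Equiv.Perm.permMatrix, PEquiv.toMatrix_apply, Equiv.toPEquiv_apply]
    have hiff : (j = σe⁻¹ i) ↔ (i = σf j) := by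
      rw [Equiv.Perm.inv_def, Equiv.eq_symm_apply, hσe]
      exact eq_comm
    simp only [Option.mem_some_iff, hiff]
    by_cases hc : i = σf j
    · have hcc : σe⁻¹ (σf j) = j := by
        rw [Equiv.Perm.inv_def, ← hσe, Equiv.symm_apply_apply]
      simp [hc, hcc, MonoidAlgebra.of_apply, MonoidAlgebra.mapDomainRingHom_apply,
        Finsupp.mapDomain.addMonoidHom_apply, Finsupp.mapDomain_single]
    · have hcc : ¬ (σe⁻¹ i = j) := fun hd => hc (by
        rw [← hσe, ← hd, Equiv.Perm.inv_def, Equiv.apply_symm_apply])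
      simp [hc, hcc, map_zero]
      rw [if_neg (show ¬ σe.symm i = j from hcc)]
      simp
  have hRmat : Rm.map (MonoidAlgebra.mapDomainRingHom R π) =
      Matrix.diagonal (fun i => MonoidAlgebra.of R A (π (hh' i))) *
        τe.permMatrix (MonoidAlgebra R A) := by
    ext i j
    rw [Matrix.map_apply, hRval i j, Matrix.diagonal_mul]
    rw [Equiv.Perm.permMatrix, PEquiv.toMatrix_apply, Equiv.toPEquiv_apply]
    have hiff : (j = τe i) ↔ (j = τf i) := by rw [hτe]
    simp only [Option.mem_some_iff, hiff]
    by_cases hc : j = τf i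
    · simp [hc, hτe, MonoidAlgebra.of_apply, MonoidAlgebra.mapDomainRingHom_apply,
        Finsupp.mapDomain.addMonoidHom_apply, Finsupp.mapDomain_single]
    · have hcc : ¬ (τe i = j) := fun hd => hc (by rw [← hd, hτe])
      simp [hc, hcc, map_zero]
  -- the product identity in A
  have hprodA : ∏ i : Fin m, π (hh' i) = ∏ j : Fin m, π (hh j) := by
    have hterm : ∀ i, π (hh' i) =
        π (k i) * π (hh (σe.symm (ρe i))) * (π (k (τe i)))⁻¹ := by
      intro i
      rw [hτe i, (hkey i).2]
      simp [map_mul]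
    calc ∏ i : Fin m, π (hh' i)
        = (∏ i : Fin m, π (k i)) * (∏ i : Fin m, π (hh (σe.symm (ρe i)))) *
          (∏ i : Fin m, (π (k (τe i)))⁻¹) := by
          simp only [hterm, Finset.prod_mul_distrib]
      _ = (∏ i : Fin m, π (k i)) * (∏ j : Fin m, π (hh j)) *
          (∏ i : Fin m, π (k i))⁻¹ := by
          congr 1
          · congr 1
            exact Equiv.prod_comp (ρe.trans σe.symm) (fun j => π (hh j))
          · rw [Finset.prod_inv_distrib]
            congr 1
            exact Equiv.prod_comp τe (fun i => π (k i))
      _ = ∏ j : Fin m, π (hh j) := by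
          rw [mul_comm ((∏ i : Fin m, π (k i))) _, mul_assoc, mul_inv_cancel, mul_one]
  -- sign identity
  have hsign : Equiv.Perm.sign τe = Equiv.Perm.sign σe⁻¹ := by
    rw [hτedef, map_mul, map_mul, Equiv.Perm.sign_inv ρe]
    rw [mul_comm, ← mul_assoc, Int.units_mul_self, one_mul]
  -- finish
  rw [hLmat, hRmat, Matrix.det_mul, Matrix.det_mul, Matrix.det_permutation,
    Matrix.det_permutation, Matrix.det_diagonal, Matrix.det_diagonal, hsign]
  have : ∏ i : Fin m, MonoidAlgebra.of R A (π (hh' i)) =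
      ∏ j : Fin m, MonoidAlgebra.of R A (π (hh j)) := by
    rw [← map_prod (MonoidAlgebra.of R A) (fun i => π (hh' i)) Finset.univ,
      ← map_prod (MonoidAlgebra.of R A) (fun j => π (hh j)) Finset.univ, hprodA]
  rw [this, mul_comm]
end

section
/- Let R = ℂ, let D₃ = ⟨a, b | a³ = b² = e, ab = ba⁻¹⟩ be the dihedral group of order 6, let G = (ℤ/2ℤ) × D₃, let H = {0̄} × D₃ ≅ D₃, and let K be the commutator subgroup of H. Then the element α = (0̄, e) + (0̄, a) + (0̄, a²) of the group algebra ℂG is not invertible in ℂG, but the noncommutative determinant Det(α) = det(ψ(L_T(α))) = 9·K (nine times the identity coset, as an element of ℂ(H/K)) is invertible in ℂ(H/K). In particular, invertibility of α in RG is not equivalent to invertibility of Det(α) in R(H/K). -/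
noncomputable section

/-- `G = (ℤ/2ℤ) × D₃`, with `ℤ/2ℤ` written multiplicatively and
`D₃` the dihedral group of order 6 (`a = DihedralGroup.r 1`, `b = DihedralGroup.sr 0`). -/
abbrev ExampleG : Type := Multiplicative (ZMod 2) × DihedralGroup 3

/-- `H = {0̄} × D₃`, the subgroup of `G` of index 2 isomorphic to `D₃`. -/
def ExampleH : Subgroup ExampleG :=
  (⊥ : Subgroup (Multiplicative (ZMod 2))).prod (⊤ : Subgroup (DihedralGroup 3))

/-- `α = (0̄, e) + (0̄, a) + (0̄, a²) ∈ ℂG`. -/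
def exampleα : MonoidAlgebra ℂ ExampleG :=
  MonoidAlgebra.of ℂ ExampleG (1, (1 : DihedralGroup 3)) +
    MonoidAlgebra.of ℂ ExampleG (1, DihedralGroup.r 1) +
    MonoidAlgebra.of ℂ ExampleG (1, DihedralGroup.r 2)

namespace St17

open MonoidAlgebra Finsupp

lemma mem_ExampleH {g : ExampleG} : g ∈ ExampleH ↔ g.1 = 1 := by
  simp [ExampleH, Subgroup.mem_prod, Subgroup.mem_bot]

def pfun (g : ExampleG) : Abelianization ExampleH :=
  Abelianization.of ⟨(1, g.2), mem_ExampleH.mpr rfl⟩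

/-- The projection `G → Abelianization H`. -/
def pHom : ExampleG →* Abelianization ExampleH where
  toFun := pfun
  map_one' := by
    unfold pfun
    rw [show (⟨(1, (1 : ExampleG).2), mem_ExampleH.mpr rfl⟩ : ExampleH) = 1 from
      Subtype.ext rfl, map_one]
  map_mul' g g' := by
    unfold pfun
    rw [← map_mul]
    exact congrArg _ (Subtype.ext rfl)

lemma pHom_subtype (h : ExampleH) : pHom (h : ExampleG) = Abelianization.of h := by
  show pfun (h : ExampleG) = Abelianization.of h
  unfold pfun
  congr 1
  exact Subtype.ext (Prod.ext (mem_ExampleH.mp h.2).symm rfl)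

def ha : ExampleH := ⟨(1, DihedralGroup.r 1), mem_ExampleH.mpr rfl⟩
def hb : ExampleH := ⟨(1, DihedralGroup.sr 0), mem_ExampleH.mpr rfl⟩

lemma ab_of_ha : Abelianization.of ha = 1 := by
  have hconj : hb * ha * hb⁻¹ = ha⁻¹ := by
    apply Subtype.ext
    decide
  set x := Abelianization.of ha with hx
  have h1 : x⁻¹ = x := by
    rw [hx, ← map_inv, ← hconj, map_mul, map_mul, map_inv]
    rw [mul_comm (Abelianization.of hb), mul_assoc, mul_inv_cancel, mul_one]
  have h2 : x * x = 1 := by nth_rewrite 1 [← h1]; exact inv_mul_cancel x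
  have h3 : x * x * x = 1 := by
    have : ha * ha * ha = 1 := by apply Subtype.ext; decide
    rw [hx, ← map_mul, ← map_mul, this, map_one]
  rw [h2, one_mul] at h3
  exact h3

lemma pHom_rot1 : pHom (1, DihedralGroup.r 1) = 1 := by
  have : pHom (1, DihedralGroup.r 1) = Abelianization.of ha := rfl
  rw [this, ab_of_ha]

lemma pHom_rot2 : pHom (1, DihedralGroup.r 2) = 1 := by
  have h : ((1, DihedralGroup.r 2) : ExampleG) = (1, DihedralGroup.r 1) * (1, DihedralGroup.r 1) := by
    decide
  rw [h, map_mul, pHom_rot1, mul_one]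

lemma pi_iota (x : MonoidAlgebra ℂ ExampleH) :
    MonoidAlgebra.mapDomainRingHom ℂ pHom
      (MonoidAlgebra.mapDomainRingHom ℂ ExampleH.subtype x) =
    MonoidAlgebra.mapDomainRingHom ℂ
      (Abelianization.of : ExampleH →* Abelianization ExampleH) x := by
  show MonoidAlgebra.mapDomain pHom (MonoidAlgebra.mapDomain ExampleH.subtype x) =
    MonoidAlgebra.mapDomain (Abelianization.of : ExampleH →* Abelianization ExampleH) x
  apply MonoidAlgebra.coeff_injective
  simp only [MonoidAlgebra.coeff_mapDomain]
  rw [← Finsupp.mapDomain_comp]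
  congr 1
  funext h
  exact pHom_subtype h

lemma pi_of (g : ExampleG) :
    MonoidAlgebra.mapDomainRingHom ℂ pHom (MonoidAlgebra.of ℂ ExampleG g) =
      MonoidAlgebra.of ℂ (Abelianization ExampleH) (pHom g) := by
  show MonoidAlgebra.mapDomain pHom _ = _
  simp only [MonoidAlgebra.of_apply]
  exact MonoidAlgebra.mapDomain_single

lemma pi_alpha : MonoidAlgebra.mapDomainRingHom ℂ pHom exampleα = 3 := by
  unfold exampleα
  rw [map_add, map_add, pi_of, pi_of, pi_of, pHom_rot1, pHom_rot2,
    show ((1, (1 : DihedralGroup 3)) : ExampleG) = 1 from rfl, map_one, map_one]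
  norm_num

lemma alpha_mul_r1 :
    exampleα * MonoidAlgebra.of ℂ ExampleG (1, DihedralGroup.r 1) = exampleα := by
  unfold exampleα
  rw [add_mul, add_mul, ← map_mul, ← map_mul, ← map_mul]
  rw [show ((1:Multiplicative (ZMod 2)), (1:DihedralGroup 3)) * (1, DihedralGroup.r 1)
      = ((1, DihedralGroup.r 1) : ExampleG) from by decide]
  rw [show ((1:Multiplicative (ZMod 2)), DihedralGroup.r 1) * (1, DihedralGroup.r 1)
      = ((1, DihedralGroup.r 2) : ExampleG) from by decide]
  rw [show ((1:Multiplicative (ZMod 2)), DihedralGroup.r 2) * (1, DihedralGroup.r 1)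
      = ((1, (1:DihedralGroup 3)) : ExampleG) from by decide]
  abel

lemma alpha_not_unit : ¬ IsUnit exampleα := by
  intro h
  have hγ : exampleα * (MonoidAlgebra.of ℂ ExampleG (1, (1 : DihedralGroup 3)) -
      MonoidAlgebra.of ℂ ExampleG (1, DihedralGroup.r 1)) = exampleα * 0 := by
    rw [mul_sub, show ((1, (1 : DihedralGroup 3)) : ExampleG) = 1 from rfl, map_one,
      mul_one, alpha_mul_r1, sub_self, mul_zero]
  have := h.mul_left_cancel hγ
  have h2 : (MonoidAlgebra.of ℂ ExampleG (1, (1 : DihedralGroup 3)) : MonoidAlgebra ℂ ExampleG)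
      = MonoidAlgebra.of ℂ ExampleG (1, DihedralGroup.r 1) := by
    rwa [sub_eq_zero] at this
  simp only [MonoidAlgebra.of_apply] at h2
  rcases MonoidAlgebra.single_inj.mp h2 with ⟨h3, -⟩ | ⟨h3, -⟩
  · exact absurd h3 (by decide)
  · exact one_ne_zero h3

lemma of_unit {G : Type*} [Group G] (g : G) : IsUnit (MonoidAlgebra.of ℂ G g) :=
  ⟨⟨MonoidAlgebra.of ℂ G g, MonoidAlgebra.of ℂ G g⁻¹,
    by rw [← map_mul, mul_inv_cancel, map_one],
    by rw [← map_mul, inv_mul_cancel, map_one]⟩, rfl⟩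

lemma normal_conj {h g : ExampleG} (hh : h ∈ ExampleH) : g⁻¹ * (h * g) ∈ ExampleH := by
  rw [mem_ExampleH] at hh ⊢
  show (g.1)⁻¹ * (h.1 * g.1) = 1
  rw [hh, one_mul, inv_mul_cancel]

lemma supp_of_mul (g : ExampleG) (x : MonoidAlgebra ℂ ExampleH) {g' : ExampleG}
    (h : g' ∈ (MonoidAlgebra.of ℂ ExampleG g *
      MonoidAlgebra.mapDomainRingHom ℂ ExampleH.subtype x).coeff.support) :
    g⁻¹ * g' ∈ ExampleH := by
  classical
  rw [MonoidAlgebra.of_apply] at h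
  have h1 := MonoidAlgebra.support_coeff_single_mul_subset
    (MonoidAlgebra.mapDomainRingHom ℂ ExampleH.subtype x) (1:ℂ) g h
  obtain ⟨y, hy, rfl⟩ := Finset.mem_image.mp h1
  rw [show (MonoidAlgebra.mapDomainRingHom ℂ ExampleH.subtype x).coeff
      = Finsupp.mapDomain ExampleH.subtype x.coeff from rfl,
    Finsupp.mapDomain_support_of_injective (Subgroup.subtype_injective _) x.coeff] at hy
  obtain ⟨hh, _, rfl⟩ := Finset.mem_image.mp hy
  rw [← mul_assoc, inv_mul_cancel, one_mul]
  exact hh.2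

lemma supp_alpha_mul (g : ExampleG) {g' : ExampleG}
    (h : g' ∈ (exampleα * MonoidAlgebra.of ℂ ExampleG g).coeff.support) : g⁻¹ * g' ∈ ExampleH := by
  classical
  rw [MonoidAlgebra.of_apply] at h
  have h1 := MonoidAlgebra.support_coeff_mul_single_subset exampleα (1:ℂ) g h
  obtain ⟨y, hy, rfl⟩ := Finset.mem_image.mp h1
  have hsupp : exampleα.coeff.support ⊆
      ({((1:Multiplicative (ZMod 2)), (1:DihedralGroup 3)), (1, DihedralGroup.r 1),
        (1, DihedralGroup.r 2)} : Finset ExampleG) := by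
    unfold exampleα
    simp only [MonoidAlgebra.of_apply, MonoidAlgebra.coeff_add, MonoidAlgebra.coeff_single]
    refine Finsupp.support_add.trans (Finset.union_subset
      (Finsupp.support_add.trans (Finset.union_subset ?_ ?_)) ?_) <;>
      refine Finsupp.support_single_subset.trans ?_ <;> intro z hz <;>
      simp only [Finset.mem_singleton] at hz <;> subst hz <;> decide
  have hyH : y ∈ ExampleH := by
    have := hsupp hy
    simp only [Finset.mem_insert, Finset.mem_singleton] at this
    rcases this with rfl | rfl | rfl <;> exact mem_ExampleH.mpr rfl
  exact normal_conj hyH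

end St17

/-- With `K = [H, H]` the commutator subgroup of `H` (so that
`H/K = Abelianization H`), the element `α = (0̄,e) + (0̄,a) + (0̄,a²)` of `ℂG` is
not invertible, but for any complete set `{t₁, t₂}` of left coset
representatives of `H` in `G` and the corresponding left regular
representation matrix `L = L_T(α)`, the noncommutative determinant
`Det(α) = det(ψ(L)) = 9·K` (nine times the identity coset) is invertible in
`ℂ(H/K)`.  In particular invertibility of `α` in `ℂG` is not equivalent to
invertibility of `Det(α)` in `ℂ(H/K)`. -/
theorem det_invertible_but_element_not_invertible
    (t : Fin 2 → ExampleG)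
    (ht : ∀ g : ExampleG, ∃! i : Fin 2, (t i)⁻¹ * g ∈ ExampleH)
    (L : Matrix (Fin 2) (Fin 2) (MonoidAlgebra ℂ ExampleH))
    (hL : ∀ j : Fin 2, exampleα * MonoidAlgebra.of ℂ ExampleG (t j) =
      ∑ i : Fin 2, MonoidAlgebra.of ℂ ExampleG (t i) *
        MonoidAlgebra.mapDomainRingHom ℂ ExampleH.subtype (L i j)) :
    ¬ IsUnit exampleα ∧
    (L.map (MonoidAlgebra.mapDomainRingHom ℂ
        (Abelianization.of : ExampleH →* Abelianization ExampleH))).det =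
      (9 : MonoidAlgebra ℂ (Abelianization ExampleH)) ∧
    IsUnit ((L.map (MonoidAlgebra.mapDomainRingHom ℂ
        (Abelianization.of : ExampleH →* Abelianization ExampleH))).det) := by
  classical
  have huniv : ∀ i j : Fin 2, i ≠ j → (Finset.univ : Finset (Fin 2)) = {i, j} := by
    intro i j hij
    refine (Finset.eq_of_subset_of_card_le (Finset.subset_univ _) ?_).symm
    rw [Finset.card_insert_of_notMem (by simpa using hij), Finset.card_singleton,
      Finset.card_univ]
    simp
  have hsum2 : ∀ i j : Fin 2, i ≠ j →
      exampleα * MonoidAlgebra.of ℂ ExampleG (t j) =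
        MonoidAlgebra.of ℂ ExampleG (t i) *
          MonoidAlgebra.mapDomainRingHom ℂ ExampleH.subtype (L i j) +
        MonoidAlgebra.of ℂ ExampleG (t j) *
          MonoidAlgebra.mapDomainRingHom ℂ ExampleH.subtype (L j j) := by
    intro i j hij
    have hsum := hL j
    rwa [huniv i j hij, Finset.sum_pair hij] at hsum
  have hzero : ∀ i j : Fin 2, i ≠ j →
      MonoidAlgebra.mapDomainRingHom ℂ ExampleH.subtype (L i j) = 0 := by
    intro i j hij
    have key : MonoidAlgebra.of ℂ ExampleG (t i) *
        MonoidAlgebra.mapDomainRingHom ℂ ExampleH.subtype (L i j) = 0 := by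
      by_contra hne
      obtain ⟨g', hg'⟩ := Finsupp.support_nonempty_iff.mpr (mt MonoidAlgebra.coeff_eq_zero.mp hne)
      have h1 : (t i)⁻¹ * g' ∈ ExampleH := St17.supp_of_mul _ _ hg'
      have hEq : MonoidAlgebra.of ℂ ExampleG (t i) *
          MonoidAlgebra.mapDomainRingHom ℂ ExampleH.subtype (L i j)
          = exampleα * MonoidAlgebra.of ℂ ExampleG (t j)
            - MonoidAlgebra.of ℂ ExampleG (t j) *
              MonoidAlgebra.mapDomainRingHom ℂ ExampleH.subtype (L j j) := by
        rw [hsum2 i j hij]; abel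
      have h2 : (t j)⁻¹ * g' ∈ ExampleH := by
        rw [hEq, MonoidAlgebra.coeff_sub] at hg'
        rcases Finset.mem_union.mp (Finsupp.support_sub hg') with hmem | hmem
        · exact St17.supp_alpha_mul _ hmem
        · exact St17.supp_of_mul _ _ hmem
      obtain ⟨i₀, _, huq⟩ := ht g'
      exact hij ((huq i h1).trans (huq j h2).symm)
    exact (St17.of_unit (t i)).mul_left_cancel (by rw [key, mul_zero])
  have hpsi_diag : ∀ j, MonoidAlgebra.mapDomainRingHom ℂ
      (Abelianization.of : ExampleH →* Abelianization ExampleH) (L j j) = 3 := by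
    intro j
    have hij : (j + 1 : Fin 2) ≠ j := by omega
    have hdiag : MonoidAlgebra.of ℂ ExampleG (t j) *
        MonoidAlgebra.mapDomainRingHom ℂ ExampleH.subtype (L j j)
        = exampleα * MonoidAlgebra.of ℂ ExampleG (t j) := by
      rw [hsum2 (j+1) j hij, hzero (j+1) j hij, mul_zero, zero_add]
    have h := congrArg (MonoidAlgebra.mapDomainRingHom ℂ St17.pHom) hdiag
    rw [map_mul, map_mul, St17.pi_iota, St17.pi_alpha, St17.pi_of,
      mul_comm (3 : MonoidAlgebra ℂ (Abelianization ExampleH))] at h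
    exact (St17.of_unit (St17.pHom (t j))).mul_left_cancel h
  have hpsi_off : ∀ i j, i ≠ j → MonoidAlgebra.mapDomainRingHom ℂ
      (Abelianization.of : ExampleH →* Abelianization ExampleH) (L i j) = 0 := by
    intro i j hij
    rw [← St17.pi_iota, hzero i j hij, map_zero]
  have hdet : (L.map (MonoidAlgebra.mapDomainRingHom ℂ
      (Abelianization.of : ExampleH →* Abelianization ExampleH))).det
      = (9 : MonoidAlgebra ℂ (Abelianization ExampleH)) := by
    rw [Matrix.det_fin_two]
    simp only [Matrix.map_apply]
    rw [hpsi_diag 0, hpsi_diag 1, hpsi_off 0 1 (by decide), hpsi_off 1 0 (by decide)]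
    norm_num
  have h9 : IsUnit (9 : MonoidAlgebra ℂ (Abelianization ExampleH)) := by
    have h := (isUnit_iff_ne_zero.mpr (by norm_num : (9:ℂ) ≠ 0)).map
      (algebraMap ℂ (MonoidAlgebra ℂ (Abelianization ExampleH)))
    rwa [map_ofNat] at h
  exact ⟨St17.alpha_not_unit, hdet, hdet ▸ h9⟩


end
end
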